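/- Erdős–Gallai theorem: a sequence of nonnegative integers d₁ ≥ d₂ ≥ … ≥ d_n is the degree sequence of some simple graph if and only if Σᵢ dᵢ is even and for every k ∈ {1,…,n}, Σ_{i=1}^k dᵢ ≤ k(k−1) + Σ_{i=k+1}^n min(dᵢ, k). -/

import Mathlib

namespace ErdosGallaiAux

open Finset


lemma card_filter_lt {n : ℕ} (k : ℕ) (h : k ≤ n) :
    (Finset.univ.filter (fun i : Fin n => i.val < k)).card = k := by
  have : Finset.univ.filter (fun i : Fin n => i.val < k) =
      Finset.map ⟨Fin.castLE h, Fin.castLE_injective h⟩ Finset.univ := by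
    ext i
    simp only [Finset.mem_filter, Finset.mem_map, Finset.mem_univ, true_and,
      Function.Embedding.coeFn_mk]
    constructor
    · intro hi; exact ⟨⟨i.val, hi⟩, Fin.ext rfl⟩
    · rintro ⟨j, rfl⟩; exact j.isLt
  rw [this]; simp

lemma exists_perm {n : ℕ} {f g : Fin n → ℕ}
    (h : Multiset.map f Finset.univ.val = Multiset.map g Finset.univ.val) :
    ∃ σ : Equiv.Perm (Fin n), ∀ i, f (σ i) = g i := by
  classical
  have hcard : ∀ c : ℕ, Fintype.card {a : Fin n // g a = c} = Fintype.card {a : Fin n // f a = c} := by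
    intro c
    rw [Fintype.card_subtype, Fintype.card_subtype]
    have h1 := congrArg (Multiset.count c) h
    rw [Multiset.count_map, Multiset.count_map] at h1
    have e1 : (Multiset.filter (fun a => c = f a) Finset.univ.val).card
        = (Finset.univ.filter (fun a : Fin n => f a = c)).card := by
      simp only [Finset.card, Finset.filter_val]
      congr 1
      exact Multiset.filter_congr (fun a _ => by constructor <;> (intro; omega))
    have e2 : (Multiset.filter (fun a => c = g a) Finset.univ.val).card
        = (Finset.univ.filter (fun a : Fin n => g a = c)).card := by
      simp only [Finset.card, Finset.filter_val]
      congr 1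
      exact Multiset.filter_congr (fun a _ => by constructor <;> (intro; omega))
    rw [e1, e2] at h1
    omega
  let e : ∀ c : ℕ, {a : Fin n // g a = c} ≃ {b : Fin n // f b = c} :=
    fun c => Fintype.equivOfCardEq (hcard c)
  refine ⟨Equiv.ofFiberEquiv e, fun i => ?_⟩
  exact Equiv.ofFiberEquiv_map e i

lemma ncard_eq_degree {n : ℕ} (G : SimpleGraph (Fin n)) [DecidableRel G.Adj] (v : Fin n) :
    (G.neighborSet v).ncard = G.degree v := by
  rw [SimpleGraph.degree, SimpleGraph.neighborFinset, Set.ncard_eq_toFinset_card']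

lemma necessity {n : ℕ} (d : Fin n → ℕ) (G : SimpleGraph (Fin n))
    (h : Multiset.map (fun v => (G.neighborSet v).ncard) Finset.univ.val =
      Multiset.map d Finset.univ.val) :
    Even (∑ i, d i) ∧
      ∀ k, 1 ≤ k → k ≤ n →
        ∑ i ∈ Finset.univ.filter (fun i : Fin n => i.val < k), d i ≤
          k * (k - 1) +
            ∑ i ∈ Finset.univ.filter (fun i : Fin n => k ≤ i.val), min (d i) k := by
  classical
  letI : DecidableRel G.Adj := Classical.decRel _
  have hdeg : (fun v => (G.neighborSet v).ncard) = fun v => G.degree v := by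
    funext v; exact ncard_eq_degree G v
  rw [hdeg] at h
  obtain ⟨σ, hσ⟩ := exists_perm h
  constructor
  · have : ∑ i, d i = ∑ i, G.degree i := by
      rw [← Equiv.sum_comp σ (fun v => G.degree v)]
      exact Finset.sum_congr rfl fun i _ => (hσ i).symm
    rw [this, SimpleGraph.sum_degrees_eq_twice_card_edges]
    exact even_two_mul _
  · intro k hk1 hkn
    set A : Finset (Fin n) := Finset.univ.filter (fun i => i.val < k) with hA
    set B : Finset (Fin n) := Finset.univ.filter (fun i => k ≤ i.val) with hB
    have hAB : B = Aᶜ := by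
      ext i
      simp only [hA, hB, Finset.mem_compl, Finset.mem_filter, Finset.mem_univ, true_and]
      omega
    set S : Finset (Fin n) := A.image σ with hS
    have hScard : S.card = k := by
      rw [hS, Finset.card_image_of_injective _ σ.injective, card_filter_lt k hkn]
    have hsum1 : ∑ i ∈ A, d i = ∑ v ∈ S, G.degree v := by
      rw [hS, Finset.sum_image (fun a _ b _ hab => σ.injective hab)]
      exact Finset.sum_congr rfl fun i _ => (hσ i).symm
    have hScomp : Sᶜ = B.image σ := by
      rw [hAB, hS]
      ext v
      simp only [Finset.mem_compl, Finset.mem_image]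
      constructor
      · intro hv
        refine ⟨σ.symm v, ?_, by simp⟩
        by_contra hc
        exact hv ⟨σ.symm v, by simpa using hc, by simp⟩
      · rintro ⟨a, ha, rfl⟩ ⟨b, hb, hba⟩
        rw [σ.injective hba] at hb
        exact ha hb
    -- degree split
    have hsplit : ∀ v ∈ S, G.degree v ≤ (k - 1) + ((G.neighborFinset v).filter (· ∉ S)).card := by
      intro v hv
      have : G.degree v = ((G.neighborFinset v).filter (· ∈ S)).card
          + ((G.neighborFinset v).filter (· ∉ S)).card := by
        rw [SimpleGraph.degree, Finset.card_filter_add_card_filter_not]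
      rw [this]
      have h1 : ((G.neighborFinset v).filter (· ∈ S)).card ≤ k - 1 := by
        have hsub : (G.neighborFinset v).filter (· ∈ S) ⊆ S.erase v := by
          intro w hw
          simp only [Finset.mem_filter, SimpleGraph.mem_neighborFinset] at hw
          exact Finset.mem_erase.2 ⟨fun hwv => G.loopless.irrefl v (hwv ▸ hw.1), hw.2⟩
        calc ((G.neighborFinset v).filter (· ∈ S)).card ≤ (S.erase v).card :=
              Finset.card_le_card hsub
          _ = k - 1 := by rw [Finset.card_erase_of_mem hv, hScard]
      omega
    have hout : ∀ v : Fin n, (G.neighborFinset v).filter (· ∉ S) = Sᶜ.filter (G.Adj v) := by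
      intro v
      ext w
      simp [SimpleGraph.mem_neighborFinset, and_comm]
    have hdouble : ∑ v ∈ S, (Sᶜ.filter (G.Adj v)).card = ∑ w ∈ Sᶜ, (S.filter (G.Adj w)).card := by
      simp only [Finset.card_filter]
      rw [Finset.sum_comm]
      refine Finset.sum_congr rfl fun w _ => Finset.sum_congr rfl fun v _ => ?_
      simp [SimpleGraph.adj_comm]
    have hbound : ∀ w : Fin n, (S.filter (G.Adj w)).card ≤ min (G.degree w) k := by
      intro w
      refine le_min ?_ ?_
      · refine Finset.card_le_card fun v hv => ?_
        simp only [Finset.mem_filter] at hv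
        exact (SimpleGraph.mem_neighborFinset G w v).2 hv.2
      · rw [← hScard]
        exact Finset.card_le_card (Finset.filter_subset _ _)
    have hsum2 : ∑ w ∈ Sᶜ, min (G.degree w) k = ∑ i ∈ B, min (d i) k := by
      rw [hScomp, Finset.sum_image (fun a _ b _ hab => σ.injective hab)]
      exact Finset.sum_congr rfl fun i _ => by rw [hσ i]
    calc ∑ i ∈ A, d i = ∑ v ∈ S, G.degree v := hsum1
      _ ≤ ∑ v ∈ S, ((k - 1) + ((G.neighborFinset v).filter (· ∉ S)).card) :=
          Finset.sum_le_sum hsplit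
      _ = S.card * (k - 1) + ∑ v ∈ S, ((G.neighborFinset v).filter (· ∉ S)).card := by
          rw [Finset.sum_add_distrib, Finset.sum_const, smul_eq_mul]
      _ = k * (k - 1) + ∑ v ∈ S, (Sᶜ.filter (G.Adj v)).card := by
          rw [hScard]; congr 1; exact Finset.sum_congr rfl fun v _ => by rw [hout]
      _ = k * (k - 1) + ∑ w ∈ Sᶜ, (S.filter (G.Adj w)).card := by rw [hdouble]
      _ ≤ k * (k - 1) + ∑ w ∈ Sᶜ, min (G.degree w) k :=
          Nat.add_le_add_left (Finset.sum_le_sum fun w _ => hbound w) _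
      _ = k * (k - 1) + ∑ i ∈ B, min (d i) k := by rw [hsum2]



lemma ncard_insert_diff {n : ℕ} (s : Set (Fin n)) (x y : Fin n)
    (hx : x ∉ s \ {y}) (hy : y ∈ s) :
    (insert x (s \ {y})).ncard = s.ncard := by
  rw [Set.ncard_insert_of_notMem hx, Set.ncard_diff_singleton_add_one hy]

set_option maxHeartbeats 1000000 in
lemma swap_lemma {n : ℕ} (G : SimpleGraph (Fin n)) (a b c : Fin n)
    (hab : ¬G.Adj a b) (hne : a ≠ b) (hac : G.Adj a c)
    (hdeg : (G.neighborSet c).ncard ≤ (G.neighborSet b).ncard) :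
    ∃ H : SimpleGraph (Fin n),
      (∀ v, (H.neighborSet v).ncard = (G.neighborSet v).ncard) ∧ ¬H.Adj a c := by
  classical
  have hac' : a ≠ c := G.ne_of_adj hac
  have hbc : b ≠ c := fun h => hab (h ▸ hac)
  rcases eq_or_lt_of_le hdeg with heq | hlt
  · refine ⟨G.comap (Equiv.swap b c), fun v => ?_, ?_⟩
    · have h1 : (G.comap (Equiv.swap b c)).neighborSet v
          = (Equiv.swap b c) ⁻¹' (G.neighborSet (Equiv.swap b c v)) := rfl
      rw [h1, ← Equiv.image_symm_eq_preimage,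
        Set.ncard_image_of_injective _ (Equiv.swap b c).symm.injective]
      rcases eq_or_ne v b with rfl | hvb
      · rw [Equiv.swap_apply_left]; exact heq
      rcases eq_or_ne v c with rfl | hvc
      · rw [Equiv.swap_apply_right]; exact heq.symm
      · rw [Equiv.swap_apply_of_ne_of_ne hvb hvc]
    · intro h
      have h2 : G.Adj (Equiv.swap b c a) (Equiv.swap b c c) := h
      rw [Equiv.swap_apply_of_ne_of_ne hne hac', Equiv.swap_apply_right] at h2
      exact hab h2
  · have hcard2 : 2 ≤ (G.neighborSet b \ G.neighborSet c).ncard := by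
      have h1 : (G.neighborSet c).ncard = (G.neighborSet c ∩ G.neighborSet b).ncard
          + (G.neighborSet c \ G.neighborSet b).ncard := by
        rw [← Set.ncard_inter_add_ncard_diff_eq_ncard (G.neighborSet c) (G.neighborSet b)]
      have h2 : (G.neighborSet b).ncard = (G.neighborSet b ∩ G.neighborSet c).ncard
          + (G.neighborSet b \ G.neighborSet c).ncard := by
        rw [← Set.ncard_inter_add_ncard_diff_eq_ncard (G.neighborSet b) (G.neighborSet c)]
      have h3 : (G.neighborSet c \ G.neighborSet b).Nonempty :=
        ⟨a, G.adj_symm hac, fun h => hab (G.adj_symm h)⟩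
      have h3' : 0 < (G.neighborSet c \ G.neighborSet b).ncard :=
        (Set.ncard_pos (Set.toFinite _)).2 h3
      have h4 : (G.neighborSet c ∩ G.neighborSet b).ncard
          = (G.neighborSet b ∩ G.neighborSet c).ncard := by rw [Set.inter_comm]
      omega
    obtain ⟨x, hx⟩ : ((G.neighborSet b \ G.neighborSet c) \ {c}).Nonempty := by
      rw [Set.nonempty_iff_ne_empty]
      intro hemp
      rw [Set.diff_eq_empty] at hemp
      have := Set.ncard_le_ncard hemp (Set.finite_singleton c)
      rw [Set.ncard_singleton] at this
      omega
    obtain ⟨⟨hxb, hxc⟩, hxc'⟩ := hx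
    rw [Set.mem_singleton_iff] at hxc'
    have hxa : x ≠ a := fun h => hab (G.adj_symm (h ▸ hxb))
    have hxb' : x ≠ b := fun h => G.loopless.irrefl b (h ▸ hxb)
    have hbx : G.Adj b x := hxb
    have hcx : ¬G.Adj c x := hxc
    have hca : G.Adj c a := G.adj_symm hac
    have hba : ¬G.Adj b a := fun h => hab (G.adj_symm h)
    have hxcadj : ¬G.Adj x c := fun h => hcx (G.adj_symm h)
    have hxbadj : G.Adj x b := G.adj_symm hbx
    set H : SimpleGraph (Fin n) :=
      (G.deleteEdges {s(a,c), s(b,x)}) ⊔ SimpleGraph.fromEdgeSet {s(a,b), s(c,x)} with hH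
    have hAdj : ∀ u v, H.Adj u v ↔
        (G.Adj u v ∧ ¬(s(u,v) = s(a,c) ∨ s(u,v) = s(b,x))) ∨
        ((s(u,v) = s(a,b) ∨ s(u,v) = s(c,x)) ∧ u ≠ v) := by
      intro u v
      rw [hH, SimpleGraph.sup_adj, SimpleGraph.deleteEdges_adj, SimpleGraph.fromEdgeSet_adj]
      simp [Set.mem_insert_iff]
    have hnotadj : ¬H.Adj a c := by
      rw [hAdj]
      intro h
      rcases h with ⟨_, hnot⟩ | ⟨h, _⟩
      · exact hnot (Or.inl rfl)
      · rcases h with h | h <;> rw [Sym2.eq_iff] at h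
        · rcases h with ⟨_, h⟩ | ⟨h, _⟩
          · exact hbc h.symm
          · exact hne h
        · rcases h with ⟨h, _⟩ | ⟨h, _⟩
          · exact hac' h
          · exact hxa h.symm
    have nsa : H.neighborSet a = insert b (G.neighborSet a \ {c}) := by
      ext w
      simp only [Set.mem_insert_iff, Set.mem_diff, Set.mem_singleton_iff,
        SimpleGraph.mem_neighborSet, hAdj, Sym2.eq_iff]
      constructor
      · aesop
      · aesop
    have nsb : H.neighborSet b = insert a (G.neighborSet b \ {x}) := by
      ext w
      simp only [Set.mem_insert_iff, Set.mem_diff, Set.mem_singleton_iff,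
        SimpleGraph.mem_neighborSet, hAdj, Sym2.eq_iff]
      constructor
      · aesop
      · aesop
    have nsc : H.neighborSet c = insert x (G.neighborSet c \ {a}) := by
      ext w
      simp only [Set.mem_insert_iff, Set.mem_diff, Set.mem_singleton_iff,
        SimpleGraph.mem_neighborSet, hAdj, Sym2.eq_iff]
      constructor
      · aesop
      · aesop
    have nsx : H.neighborSet x = insert c (G.neighborSet x \ {b}) := by
      ext w
      simp only [Set.mem_insert_iff, Set.mem_diff, Set.mem_singleton_iff,
        SimpleGraph.mem_neighborSet, hAdj, Sym2.eq_iff]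
      constructor
      · aesop
      · aesop
    refine ⟨H, fun v => ?_, hnotadj⟩
    rcases eq_or_ne v a with rfl | hva
    · rw [nsa]
      exact ncard_insert_diff _ b c (by simp [hab]) hac
    rcases eq_or_ne v b with rfl | hvb
    · rw [nsb]
      exact ncard_insert_diff _ a x (by simp [hba]) hbx
    rcases eq_or_ne v c with rfl | hvc
    · rw [nsc]
      exact ncard_insert_diff _ x a (by simp [hcx]) hca
    rcases eq_or_ne v x with rfl | hvx
    · rw [nsx]
      exact ncard_insert_diff _ c b (by simp [hxcadj]) hxbadj
    · have : H.neighborSet v = G.neighborSet v := by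
        ext w
        simp only [SimpleGraph.mem_neighborSet, hAdj, Sym2.eq_iff]
        constructor
        · aesop
        · aesop
      rw [this]



lemma add_edge {n : ℕ} (G : SimpleGraph (Fin n)) (t m : Fin n) (hne : t ≠ m)
    (hadj : ¬G.Adj t m) :
    ∃ H : SimpleGraph (Fin n),
      (H.neighborSet t).ncard = (G.neighborSet t).ncard + 1 ∧
      (H.neighborSet m).ncard = (G.neighborSet m).ncard + 1 ∧
      ∀ v, v ≠ t → v ≠ m → (H.neighborSet v).ncard = (G.neighborSet v).ncard := by
  classical
  set H : SimpleGraph (Fin n) := G ⊔ SimpleGraph.fromEdgeSet {s(t,m)} with hH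
  have hAdj : ∀ u v, H.Adj u v ↔ G.Adj u v ∨ (s(u,v) = s(t,m) ∧ u ≠ v) := by
    intro u v
    rw [hH, SimpleGraph.sup_adj, SimpleGraph.fromEdgeSet_adj]
    simp
  have hmt : ¬G.Adj m t := fun h => hadj (G.adj_symm h)
  have hnst : H.neighborSet t = insert m (G.neighborSet t) := by
    ext w
    simp only [Set.mem_insert_iff, SimpleGraph.mem_neighborSet, hAdj, Sym2.eq_iff]
    constructor
    · aesop
    · aesop
  have hnsm : H.neighborSet m = insert t (G.neighborSet m) := by
    ext w
    simp only [Set.mem_insert_iff, SimpleGraph.mem_neighborSet, hAdj, Sym2.eq_iff]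
    constructor
    · aesop
    · aesop
  refine ⟨H, ?_, ?_, ?_⟩
  · rw [hnst, Set.ncard_insert_of_notMem (by simpa using hadj)]
  · rw [hnsm, Set.ncard_insert_of_notMem (by simpa using hmt)]
  · intro v hvt hvm
    have : H.neighborSet v = G.neighborSet v := by
      ext w
      simp only [SimpleGraph.mem_neighborSet, hAdj, Sym2.eq_iff]
      constructor
      · aesop
      · aesop
    rw [this]

/-- lift a `Fin n` indexed sequence to `ℕ` -/
def liftF {n : ℕ} (f : Fin n → ℕ) : ℕ → ℕ := fun p => if h : p < n then f ⟨p, h⟩ else 0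

lemma liftF_lt {n : ℕ} (f : Fin n → ℕ) (p : ℕ) (h : p < n) : liftF f p = f ⟨p, h⟩ :=
  dif_pos h

lemma liftF_anti {n : ℕ} {f : Fin n → ℕ} (hf : Antitone f) : Antitone (liftF f) := by
  intro p q hpq
  unfold liftF
  split_ifs with h1 h2 h2
  · exact hf (by exact_mod_cast hpq)
  · omega
  · exact Nat.zero_le _
  · exact Nat.zero_le _

lemma sum_filter_lt_eq {n : ℕ} (f : Fin n → ℕ) (k : ℕ) (hk : k ≤ n) :
    ∑ i ∈ Finset.univ.filter (fun i : Fin n => i.val < k), f i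
      = ∑ p ∈ Finset.range k, liftF f p := by
  refine Finset.sum_bij' (fun i _ => i.val) (fun p hp => ⟨p, by
    simp only [Finset.mem_range] at hp; omega⟩) ?_ ?_ ?_ ?_ ?_
  · intro a ha
    simp only [Finset.mem_filter] at ha
    simp [ha.2]
  · intro p hp
    simp only [Finset.mem_range] at hp
    simp [hp]
  · intro a ha; rfl
  · intro p hp; rfl
  · intro a ha
    simp only [Finset.mem_filter] at ha
    rw [liftF_lt f a.val a.isLt]

lemma sum_filter_ge_eq {n : ℕ} (f : Fin n → ℕ) (k : ℕ) :
    ∑ i ∈ Finset.univ.filter (fun i : Fin n => k ≤ i.val), f i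
      = ∑ p ∈ Finset.Ico k n, liftF f p := by
  refine Finset.sum_bij' (fun i _ => i.val) (fun p hp => ⟨p, by
    simp only [Finset.mem_Ico] at hp; omega⟩) ?_ ?_ ?_ ?_ ?_
  · intro a ha
    simp only [Finset.mem_filter] at ha
    simp only [Finset.mem_Ico]
    exact ⟨ha.2, a.isLt⟩
  · intro p hp
    simp only [Finset.mem_Ico] at hp
    simp [hp.1]
  · intro a ha; rfl
  · intro p hp; rfl
  · intro a ha
    rw [liftF_lt f a.val a.isLt]

lemma sum_univ_eq {n : ℕ} (f : Fin n → ℕ) :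
    ∑ i, f i = ∑ p ∈ Finset.range n, liftF f p := by
  rw [← sum_filter_lt_eq f n le_rfl]
  congr 1
  ext i
  simp [i.isLt]



lemma min_mul_le (a k K : ℕ) (h : k ≤ K) : k * min a K ≤ K * min a k := by
  rcases le_total a k with h1 | h1
  · rw [min_eq_left (le_trans h1 h), min_eq_left h1]
    exact Nat.mul_le_mul_right a h
  · rw [min_eq_right h1]
    calc k * min a K ≤ k * K := Nat.mul_le_mul_left k (min_le_right a K)
      _ = K * k := Nat.mul_comm k K

section core
variable {n : ℕ}

def EGnat (n : ℕ) (D : ℕ → ℕ) : Prop :=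
  ∀ k, 1 ≤ k → k ≤ n →
    ∑ p ∈ Finset.range k, D p ≤ k * (k - 1) + ∑ p ∈ Finset.Ico k n, min (D p) k

lemma step_EG (D : ℕ → ℕ) (hanti : Antitone D) (M t : ℕ)
    (hMn : M < n) (htM : t < M)
    (hpos : ∀ p, p ≤ M → 1 ≤ D p)
    (hzero : ∀ p, M < p → D p = 0)
    (hconst : ∀ p, p ≤ t → D p = D t)
    (hEG : EGnat n D)
    (heven : Even (∑ p ∈ Finset.range n, D p))
    (hdrop : t = M - 1 ∨ D t > D (t + 1))
    (D' : ℕ → ℕ)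
    (hD' : ∀ p, D' p = if p = t ∨ p = M then D p - 1 else D p) :
    EGnat n D' := by
  have hsplit : ∀ p, D p = D' p + (if p = t then 1 else 0) + (if p = M then 1 else 0) := by
    intro p
    rw [hD']
    rcases eq_or_ne p t with rfl | h1
    · have h2 : p ≠ M := by omega
      have h3 := hpos p (by omega)
      simp only [h2, if_true, if_false, or_false, if_pos rfl]
      omega
    · rcases eq_or_ne p M with rfl | h2
      · have h3 := hpos p le_rfl
        simp only [h1, if_false, if_true, false_or, if_pos rfl]
        omega
      · simp [h1, h2]
  have hminsplit : ∀ p K, min (D p) K ≤ min (D' p) K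
      + (if p = t then 1 else 0) + (if p = M then 1 else 0) := by
    intro p K
    have h := hsplit p
    rcases eq_or_ne p t with rfl | h1
    · have h2 : p ≠ M := by omega
      simp only [h2, if_true, if_false, if_pos rfl] at h ⊢
      omega
    · rcases eq_or_ne p M with rfl | h2
      · simp only [h1, if_false, if_true, if_pos rfl] at h ⊢
        omega
      · simp only [h1, h2, if_false] at h ⊢
        omega
  -- summed versions
  have hsum_split : ∀ K : ℕ, ∑ p ∈ Finset.range K, D p = ∑ p ∈ Finset.range K, D' p
      + (if t ∈ Finset.range K then 1 else 0) + (if M ∈ Finset.range K then 1 else 0) := by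
    intro K
    calc ∑ p ∈ Finset.range K, D p
        = ∑ p ∈ Finset.range K, (D' p + (if p = t then 1 else 0) + (if p = M then 1 else 0)) :=
          Finset.sum_congr rfl fun p _ => hsplit p
      _ = ∑ p ∈ Finset.range K, D' p + ∑ p ∈ Finset.range K, (if p = t then 1 else 0)
          + ∑ p ∈ Finset.range K, (if p = M then 1 else 0) := by
          rw [Finset.sum_add_distrib, Finset.sum_add_distrib]
      _ = _ := by
          rw [Finset.sum_ite_eq' (Finset.range K) t (fun _ => 1),
            Finset.sum_ite_eq' (Finset.range K) M (fun _ => 1)]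
  have hsum_min : ∀ (lo K : ℕ), ∑ p ∈ Finset.Ico lo n, min (D p) K
      ≤ ∑ p ∈ Finset.Ico lo n, min (D' p) K
      + (if t ∈ Finset.Ico lo n then 1 else 0) + (if M ∈ Finset.Ico lo n then 1 else 0) := by
    intro lo K
    calc ∑ p ∈ Finset.Ico lo n, min (D p) K
        ≤ ∑ p ∈ Finset.Ico lo n,
            (min (D' p) K + (if p = t then 1 else 0) + (if p = M then 1 else 0)) :=
          Finset.sum_le_sum fun p _ => hminsplit p K
      _ = _ := by
          rw [Finset.sum_add_distrib, Finset.sum_add_distrib,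
            Finset.sum_ite_eq' (Finset.Ico lo n) t (fun _ => 1),
            Finset.sum_ite_eq' (Finset.Ico lo n) M (fun _ => 1)]
  intro k hk1 hkn
  have hEGk := hEG k hk1 hkn
  by_cases hcase : t + 1 ≤ k
  · -- easy branch : k > t
    have hL := hsum_split k
    have hR := hsum_min k k
    have htin : t ∈ Finset.range k := Finset.mem_range.2 (by omega)
    have htout : t ∉ Finset.Ico k n := by
      simp only [Finset.mem_Ico]; omega
    rw [if_pos htin] at hL
    rw [if_neg htout] at hR
    rcases le_or_gt k M with hkM | hkM
    · have h1 : M ∉ Finset.range k := by simp only [Finset.mem_range]; omega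
      have h2 : M ∈ Finset.Ico k n := by simp only [Finset.mem_Ico]; omega
      rw [if_neg h1] at hL
      rw [if_pos h2] at hR
      omega
    · have h1 : M ∈ Finset.range k := Finset.mem_range.2 hkM
      have h2 : M ∉ Finset.Ico k n := by simp only [Finset.mem_Ico]; omega
      rw [if_pos h1] at hL
      rw [if_neg h2] at hR
      omega
  · -- hard branch : k ≤ t
    push_neg at hcase
    have hkt : k ≤ t := by omega
    have hDt1 : 1 ≤ D t := hpos t (by omega)
    -- first k entries of D' are all D t
    have hconst' : ∀ p, p < k → D' p = D t := by
      intro p hp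
      rw [hD', if_neg (by omega), hconst p (by omega)]
    have hL : ∑ p ∈ Finset.range k, D' p = k * D t := by
      rw [Finset.sum_congr rfl fun p hp => hconst' p (Finset.mem_range.1 hp)]
      rw [Finset.sum_const, Finset.card_range, smul_eq_mul]
    rw [hL]
    rcases lt_trichotomy (D t) k with h3a | h3c | h3b
    · -- D t < k : trivial
      have : k * D t ≤ k * (k - 1) := Nat.mul_le_mul_left k (by omega)
      omega
    · -- D t = k : need RHS sum ≥ k
      have hsplit1 : ∑ p ∈ Finset.Ico k n, min (D' p) k
          = ∑ p ∈ Finset.Ico k t, min (D' p) k + ∑ p ∈ Finset.Ico t n, min (D' p) k := by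
        rw [Finset.sum_Ico_consecutive _ hkt (by omega)]
      have hgoal : k ≤ ∑ p ∈ Finset.Ico k n, min (D' p) k := by
        rcases lt_or_eq_of_le hkt with hklt | hkeq
        · -- k < t : the interval [k,t) already contributes (t-k)*k ≥ k
          have hconst2 : ∀ p ∈ Finset.Ico k t, min (D' p) k = k := by
            intro p hp
            simp only [Finset.mem_Ico] at hp
            rw [hD', if_neg (by omega), hconst p (by omega), h3c, min_self]
          rw [hsplit1, Finset.sum_congr rfl hconst2, Finset.sum_const, Nat.card_Ico,
            smul_eq_mul]
          have : 1 * k ≤ (t - k) * k := Nat.mul_le_mul_right k (by omega)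
          omega
        · -- k = t
          subst hkeq
          have hsplit2 : ∑ p ∈ Finset.Ico k n, min (D' p) k
              = min (D' k) k + ∑ p ∈ Finset.Ico (k+1) n, min (D' p) k := by
            rw [← Finset.sum_Ico_consecutive _ (by omega : k ≤ k + 1) (by omega : k + 1 ≤ n)]
            congr 1
            rw [Finset.sum_Ico_eq_sum_range]
            simp
          have hDk : D' k = k - 1 := by rw [hD', if_pos (Or.inl rfl), h3c]
          rw [hsplit2, hDk]
          have h1 : min (k - 1) k = k - 1 := min_eq_left (by omega)
          rw [h1]
          -- need the tail ≥ 1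
          have htail : 1 ≤ ∑ p ∈ Finset.Ico (k+1) n, min (D' p) k := by
            rcases lt_or_eq_of_le (by omega : k + 1 ≤ M) with hM2 | hM2
            · -- t + 1 < M : use p = k+1
              have hmem : k + 1 ∈ Finset.Ico (k+1) n := by
                simp only [Finset.mem_Ico]; omega
              have hval : 1 ≤ min (D' (k+1)) k := by
                have : D' (k+1) = D (k+1) := by rw [hD', if_neg (by omega)]
                have := hpos (k+1) (by omega)
                omega
              calc 1 ≤ min (D' (k+1)) k := hval
                _ ≤ _ := Finset.single_le_sum (f := fun p => min (D' p) k)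
                    (fun p _ => Nat.zero_le _) hmem
            · -- M = k + 1
              rcases le_or_gt 2 (D M) with hDM | hDM
              · have hmem : M ∈ Finset.Ico (k+1) n := by
                  simp only [Finset.mem_Ico]; omega
                have hval : 1 ≤ min (D' M) k := by
                  have : D' M = D M - 1 := by rw [hD', if_pos (Or.inr rfl)]
                  omega
                calc 1 ≤ min (D' M) k := hval
                  _ ≤ _ := Finset.single_le_sum (f := fun p => min (D' p) k)
                      (fun p _ => Nat.zero_le _) hmem
              · -- D M = 1 : parity contradiction
                exfalso
                have hDM1 : D M = 1 := by
                  have := hpos M le_rfl; omega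
                have hsum : ∑ p ∈ Finset.range n, D p = (k+1) * k + 1 := by
                  have e0 : ∑ p ∈ Finset.Ico 0 (M+1), D p + ∑ p ∈ Finset.Ico (M+1) n, D p
                      = ∑ p ∈ Finset.Ico 0 n, D p :=
                    Finset.sum_Ico_consecutive _ (Nat.zero_le _) (by omega)
                  have e1 : ∑ p ∈ Finset.range n, D p
                      = ∑ p ∈ Finset.range (M+1), D p + ∑ p ∈ Finset.Ico (M+1) n, D p := by
                    rw [Finset.range_eq_Ico, ← e0, Finset.range_eq_Ico]
                  have e2 : ∑ p ∈ Finset.Ico (M+1) n, D p = 0 :=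
                    Finset.sum_eq_zero fun p hp => hzero p
                      (by simp only [Finset.mem_Ico] at hp; omega)
                  have e3 : ∑ p ∈ Finset.range (M+1), D p
                      = ∑ p ∈ Finset.range (k+1), D p + D M := by
                    have hM1 : M + 1 = (k + 1) + 1 := by omega
                    rw [hM1, Finset.sum_range_succ, hM2]
                  have e4 : ∑ p ∈ Finset.range (k+1), D p = (k+1) * D k := by
                    rw [Finset.sum_congr rfl fun p hp =>
                      hconst p (by simp only [Finset.mem_range] at hp; omega)]
                    rw [Finset.sum_const, Finset.card_range, smul_eq_mul]
                  rw [e1, e2, e3, e4, hDM1, h3c]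
                rw [hsum] at heven
                have hev2 : Even (k * (k+1)) := Nat.even_mul_succ_self k
                have e5 : (k+1) * k = k * (k+1) := Nat.mul_comm _ _
                rcases heven with ⟨u, hu⟩
                rcases hev2 with ⟨v, hv⟩
                omega
          omega
      have hkk : k * D t = k * (k - 1) + k := by
        have h0 : k - 1 + 1 = k := by omega
        calc k * D t = k * ((k - 1) + 1) := by rw [h3c, h0]
          _ = k * (k - 1) + k := by ring
      omega
    · -- D t > k
      have hsplitR : ∑ p ∈ Finset.Ico k n, min (D' p) k
          = ∑ p ∈ Finset.Ico k (t+1), min (D' p) k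
            + ∑ p ∈ Finset.Ico (t+1) n, min (D' p) k := by
        rw [Finset.sum_Ico_consecutive _ (by omega) (by omega)]
      have hconst3 : ∀ p ∈ Finset.Ico k (t+1), min (D' p) k = k := by
        intro p hp
        simp only [Finset.mem_Ico] at hp
        rcases eq_or_ne p t with rfl | hpt
        · rw [hD', if_pos (Or.inl rfl)]
          exact min_eq_right (by omega)
        · rw [hD', if_neg (by omega), hconst p (by omega)]
          exact min_eq_right (by omega)
      have hfirst : ∑ p ∈ Finset.Ico k (t+1), min (D' p) k = (t + 1 - k) * k := by
        rw [Finset.sum_congr rfl hconst3, Finset.sum_const, Nat.card_Ico, smul_eq_mul]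
      set X := ∑ p ∈ Finset.Ico (t+1) n, min (D' p) k with hX
      rw [hsplitR, hfirst]
      have hkk : k * (k-1) + (t + 1 - k) * k = k * t := by
        rw [Nat.mul_comm (t+1-k) k, ← Nat.mul_add]
        congr 1
        omega
      -- goal : k * D t ≤ k * (k-1) + ((t+1-k)*k + X)
      have hgoal2 : k * D t ≤ k * t + X := by
        rcases le_or_gt (D t) t with hDtt | hDtt
        · have : k * D t ≤ k * t := Nat.mul_le_mul_left k hDtt
          omega
        · -- D t ≥ t + 1 : use EG at t+1
          set Y := ∑ p ∈ Finset.Ico (t+1) n, min (D p) (t+1) with hY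
          have hEGt := hEG (t+1) (by omega) (by omega)
          have hLt : ∑ p ∈ Finset.range (t+1), D p = (t+1) * D t := by
            rw [Finset.sum_congr rfl fun p hp =>
              hconst p (by simp only [Finset.mem_range] at hp; omega)]
            rw [Finset.sum_const, Finset.card_range, smul_eq_mul]
          rw [hLt] at hEGt
          have hEGt' : (t+1) * D t ≤ (t+1) * t + Y := by
            have : (t+1) - 1 = t := by omega
            rw [this] at hEGt
            exact hEGt
          set Y' := ∑ p ∈ Finset.Ico (t+1) n, min (D' p) (t+1) with hY'
          have hYY' : Y ≤ Y' + 1 := by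
            have h := hsum_min (t+1) (t+1)
            have h1 : t ∉ Finset.Ico (t+1) n := by simp only [Finset.mem_Ico]; omega
            have h2 : M ∈ Finset.Ico (t+1) n := by simp only [Finset.mem_Ico]; omega
            rw [if_neg h1, if_pos h2] at h
            omega
          have hXY' : k * Y' ≤ (t+1) * X := by
            rw [hY', hX, Finset.mul_sum, Finset.mul_sum]
            exact Finset.sum_le_sum fun p _ => min_mul_le (D' p) k (t+1) (by omega)
          -- final arithmetic
          by_contra hcon
          push_neg at hcon
          have h2 : (t+1) * (k * t + X + 1) ≤ (t+1) * (k * D t) :=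
            Nat.mul_le_mul_left (t+1) hcon
          have h3 : k * ((t+1) * D t) ≤ k * ((t+1) * t + Y) :=
            Nat.mul_le_mul_left k hEGt'
          have e1 : k * ((t+1) * D t) = (t+1) * (k * D t) := by ring
          have e2 : k * ((t+1) * t + Y) = (t+1) * (k * t) + k * Y := by ring
          have e3 : (t+1) * (k * t + X + 1) = (t+1) * (k * t) + (t+1) * X + (t+1) := by ring
          have h4 : k * Y ≤ k * Y' + k := by
            calc k * Y ≤ k * (Y' + 1) := Nat.mul_le_mul_left k hYY'
              _ = k * Y' + k := by ring
          -- combine: (t+1)*(k*t) + (t+1)*X + (t+1) ≤ (t+1)*(k*D t) ≤ (t+1)*(k*t) + (t+1)*X + k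
          have h5 : (t+1) ≤ k := by
            have c1 : (t+1) * (k * t) + (t+1) * X + (t+1) ≤ (t+1) * (k * D t) := by
              rw [← e3]; exact h2
            have c2 : (t+1) * (k * D t) ≤ (t+1) * (k * t) + (t+1) * X + k := by
              calc (t+1) * (k * D t) = k * ((t+1) * D t) := e1.symm
                _ ≤ k * ((t+1) * t + Y) := h3
                _ = (t+1) * (k * t) + k * Y := e2
                _ ≤ (t+1) * (k * t) + ((t+1) * X + k) := by
                    have : k * Y ≤ (t+1) * X + k := le_trans h4 (by omega)
                    omega
                _ = (t+1) * (k * t) + (t+1) * X + k := by omega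
            omega
          omega
      omega

end core




def EGfin {n : ℕ} (d : Fin n → ℕ) : Prop :=
  ∀ k, 1 ≤ k → k ≤ n →
    ∑ i ∈ Finset.univ.filter (fun i : Fin n => i.val < k), d i ≤
      k * (k - 1) +
        ∑ i ∈ Finset.univ.filter (fun i : Fin n => k ≤ i.val), min (d i) k

lemma sum_min_eq {n : ℕ} (d : Fin n → ℕ) (k : ℕ) :
    ∑ i ∈ Finset.univ.filter (fun i : Fin n => k ≤ i.val), min (d i) k
      = ∑ p ∈ Finset.Ico k n, min (liftF d p) k := by
  rw [sum_filter_ge_eq (fun i => min (d i) k) k]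
  refine Finset.sum_congr rfl fun p hp => ?_
  have hpn : p < n := (Finset.mem_Ico.1 hp).2
  rw [liftF_lt _ _ hpn, liftF_lt _ _ hpn]

lemma EG_iff {n : ℕ} (d : Fin n → ℕ) : EGfin d ↔ EGnat n (liftF d) := by
  constructor <;> intro h k hk1 hkn
  · have := h k hk1 hkn
    rwa [sum_filter_lt_eq d k hkn, sum_min_eq d k] at this
  · have := h k hk1 hkn
    rwa [sum_filter_lt_eq d k hkn, sum_min_eq d k]

theorem sufficiency : ∀ (s : ℕ) {n : ℕ} (d : Fin n → ℕ), Antitone d → (∑ i, d i) = s →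
    Even s → EGfin d → ∃ G : SimpleGraph (Fin n), ∀ v, (G.neighborSet v).ncard = d v := by
  intro s
  induction s using Nat.strong_induction_on with
  | _ s IH =>
  intro n d hd hsum hev hEG
  by_cases hall : ∀ i, d i = 0
  · refine ⟨⊥, fun v => ?_⟩
    have hb : (⊥ : SimpleGraph (Fin n)).neighborSet v = ∅ := by ext w; simp
    rw [hall v, hb, Set.ncard_empty]
  · push_neg at hall
    obtain ⟨i0, hi0⟩ := hall
    set D := liftF d with hDdef
    have hDanti : Antitone D := liftF_anti hd
    have hn0 : 0 < n := i0.pos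
    -- the last positive index
    have hPne : (Finset.univ.filter (fun i : Fin n => d i ≠ 0)).Nonempty :=
      ⟨i0, by simp [hi0]⟩
    obtain ⟨m, hdm, hmax⟩ : ∃ m : Fin n, d m ≠ 0 ∧
        ∀ i : Fin n, d i ≠ 0 → i ≤ m := by
      refine ⟨(Finset.univ.filter (fun i : Fin n => d i ≠ 0)).max' hPne, ?_, ?_⟩
      · have := (Finset.univ.filter (fun i : Fin n => d i ≠ 0)).max'_mem hPne
        simpa using this
      · intro i hi
        exact Finset.le_max' _ i (by simp [hi])
    have hzeroF : ∀ i : Fin n, m < i → d i = 0 := by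
      intro i hi
      by_contra hne
      exact absurd hi (not_lt.2 (hmax i hne))
    set M : ℕ := m.val with hMdef
    have hMn : M < n := m.isLt
    have hposN : ∀ p, p ≤ M → 1 ≤ D p := by
      intro p hp
      have hpn : p < n := lt_of_le_of_lt hp hMn
      rw [hDdef, liftF_lt d p hpn]
      have h1 : (⟨p, hpn⟩ : Fin n) ≤ m := by
        rw [Fin.le_def]; exact hp
      have := hd h1
      omega
    have hzeroN : ∀ p, M < p → D p = 0 := by
      intro p hp
      rw [hDdef]
      by_cases hpn : p < n
      · rw [liftF_lt d p hpn]
        exact hzeroF ⟨p, hpn⟩ (by rw [Fin.lt_def]; exact hp)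
      · exact dif_neg hpn
    have hEGN : EGnat n D := (EG_iff d).1 hEG
    have hEvenN : Even (∑ p ∈ Finset.range n, D p) := by
      rw [← sum_univ_eq, hsum]; exact hev
    -- M ≥ 1
    have hM1 : 1 ≤ M := by
      by_contra hM0
      have hM0' : M = 0 := by omega
      have h1 := hEGN 1 le_rfl hn0
      have h2 : ∑ p ∈ Finset.Ico 1 n, min (D p) 1 = 0 :=
        Finset.sum_eq_zero fun p hp => by
          rw [hzeroN p (by simp only [Finset.mem_Ico] at hp; omega)]
          simp
      rw [h2] at h1
      simp only [Finset.range_one, Finset.sum_singleton] at h1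
      have := hposN 0 (by omega)
      omega
    -- the first index where the value drops (or M-1)
    have hex : ∃ p, p = M - 1 ∨ D p > D (p + 1) := ⟨M - 1, Or.inl rfl⟩
    obtain ⟨t, hdrop, htmin⟩ : ∃ t : ℕ, (t = M - 1 ∨ D t > D (t + 1)) ∧
        ∀ q, q < t → ¬(q = M - 1 ∨ D q > D (q + 1)) :=
      ⟨Nat.find hex, Nat.find_spec hex, fun q hq => Nat.find_min hex hq⟩
    have htM1 : t ≤ M - 1 := by
      by_contra hc
      push_neg at hc
      exact (htmin (M - 1) (by omega)) (Or.inl rfl)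
    have htM : t < M := by omega
    have hconstN : ∀ p, p ≤ t → D p = D t := by
      have hstep : ∀ q, q < t → D q = D (q + 1) := by
        intro q hq
        have := htmin q hq
        push_neg at this
        exact le_antisymm this.2 (hDanti (by omega : q ≤ q + 1))
      have key : ∀ j, ∀ p, p + j = t → D p = D t := by
        intro j
        induction j with
        | zero => intro p hp; norm_num at hp; rw [hp]
        | succ j ihj =>
          intro p hp
          rw [hstep p (by omega)]
          exact ihj (p + 1) (by omega)
      intro p hp
      exact key (t - p) p (by omega)
    set D' : ℕ → ℕ := fun p => if p = t ∨ p = M then D p - 1 else D p with hD'def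
    have hD'eq : ∀ p, D' p = if p = t ∨ p = M then D p - 1 else D p := fun p => rfl
    have hEGN' : EGnat n D' :=
      step_EG D hDanti M t hMn htM hposN hzeroN hconstN hEGN hEvenN hdrop D' hD'eq
    set d' : Fin n → ℕ := fun i => D' i.val with hd'def
    have hd'lift : liftF d' = D' := by
      funext p
      by_cases hpn : p < n
      · rw [liftF_lt d' p hpn]
      · have h1 : liftF d' p = 0 := dif_neg hpn
        have h2 : D p = 0 := hzeroN p (by omega)
        rw [h1, hD'eq]
        split_ifs <;> omega
    -- pointwise split of D
    have hptw : ∀ p, D p = D' p + (if p = t then 1 else 0) + (if p = M then 1 else 0) := by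
      intro p
      rw [hD'eq]
      rcases eq_or_ne p t with h1 | h1
      · have h2 : p ≠ M := by omega
        have h3 := hposN p (by omega)
        rw [if_pos (Or.inl h1), if_pos h1, if_neg h2]
        omega
      · rcases eq_or_ne p M with h2 | h2
        · have h3 := hposN p (le_of_eq h2)
          rw [if_pos (Or.inr h2), if_neg h1, if_pos h2]
          omega
        · rw [if_neg (by tauto), if_neg h1, if_neg h2]
          omega
    -- D' is antitone
    have hD'le : ∀ q, D' q ≤ D q := by
      intro q; rw [hD'eq]; split_ifs <;> omega
    have hD'anti : Antitone D' := by
      apply antitone_nat_of_succ_le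
      intro p
      rcases eq_or_ne p t with h1 | h1
      · rcases eq_or_ne (p + 1) M with hM2 | hM2
        · have e1 : D' (p+1) = D (p+1) - 1 := by rw [hD'eq, if_pos (Or.inr hM2)]
          have e2 : D' p = D p - 1 := by rw [hD'eq, if_pos (Or.inl h1)]
          have := hDanti (by omega : p ≤ p + 1)
          omega
        · have e1 : D' (p+1) = D (p+1) := by rw [hD'eq, if_neg (by omega)]
          have e2 : D' p = D p - 1 := by rw [hD'eq, if_pos (Or.inl h1)]
          have hgt : D p > D (p+1) := by
            have hd2 : D t > D (t + 1) := by
              rcases hdrop with h | h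
              · exfalso; omega
              · exact h
            rw [h1]
            exact hd2
          omega
      · rcases eq_or_ne p M with h2 | h2
        · have e1 : D' (p+1) = D (p+1) := by
            rw [hD'eq, if_neg (by omega)]
          have : D (p+1) = 0 := hzeroN (p+1) (by omega)
          omega
        · have e2 : D' p = D p := by rw [hD'eq, if_neg (by tauto)]
          calc D' (p+1) ≤ D (p+1) := hD'le (p+1)
            _ ≤ D p := hDanti (by omega : p ≤ p + 1)
            _ = D' p := e2.symm
    have hd'anti : Antitone d' := by
      intro i j hij
      exact hD'anti (by exact_mod_cast hij)
    -- sums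
    have hsumD : ∑ p ∈ Finset.range n, D p = ∑ p ∈ Finset.range n, D' p + 2 := by
      calc ∑ p ∈ Finset.range n, D p
          = ∑ p ∈ Finset.range n,
              (D' p + (if p = t then 1 else 0) + (if p = M then 1 else 0)) :=
            Finset.sum_congr rfl fun p _ => hptw p
        _ = ∑ p ∈ Finset.range n, D' p + ∑ p ∈ Finset.range n, (if p = t then 1 else 0)
            + ∑ p ∈ Finset.range n, (if p = M then 1 else 0) := by
            rw [Finset.sum_add_distrib, Finset.sum_add_distrib]
        _ = _ := by
            rw [Finset.sum_ite_eq' (Finset.range n) t (fun _ => 1),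
              Finset.sum_ite_eq' (Finset.range n) M (fun _ => 1),
              if_pos (Finset.mem_range.2 (by omega)), if_pos (Finset.mem_range.2 (by omega))]
    have hsum' : ∑ i, d' i + 2 = s := by
      rw [sum_univ_eq d', hd'lift, ← hsumD, ← sum_univ_eq d, hsum]
    have hs2 : 2 ≤ s := by
      have h1 : d i0 ≤ ∑ i, d i := Finset.single_le_sum (fun i _ => Nat.zero_le _)
        (Finset.mem_univ i0)
      rcases hev with ⟨u, hu⟩
      omega
    have hev' : Even (∑ i, d' i) := by
      rcases hev with ⟨u, hu⟩
      exact ⟨u - 1, by omega⟩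
    have hEGfin' : EGfin d' := by
      rw [EG_iff, hd'lift]
      exact hEGN'
    obtain ⟨G', hG'⟩ := IH (∑ i, d' i) (by omega) d' hd'anti rfl hev' hEGfin'
    -- now add the edge between t and m
    set tF : Fin n := ⟨t, by omega⟩ with htF
    have hd'val : ∀ v : Fin n, d' v = D' v.val := fun _ => rfl
    have htFval : (tF : Fin n).val = t := rfl
    have htFm : tF ≠ m := by
      intro h
      have h2 : t = M := by
        have h3 := congrArg Fin.val h
        rw [htFval] at h3
        omega
      omega
    have hdtF : D t = d tF := by
      rw [← htFval]
      calc D tF.val = d ⟨tF.val, tF.isLt⟩ := liftF_lt d tF.val tF.isLt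
        _ = d tF := congrArg d (Fin.ext rfl)
    have hdmval : D M = d m := by
      calc D M = d ⟨M, hMn⟩ := liftF_lt d M hMn
        _ = d m := congrArg d (Fin.ext hMdef)
    have hD'tval : D' t = D t - 1 := by rw [hD'eq, if_pos (Or.inl rfl)]
    have hD'Mval : D' M = D M - 1 := by rw [hD'eq, if_pos (Or.inr rfl)]
    have hDt1 : 1 ≤ D t := hposN t (by omega)
    have hDM1 : 1 ≤ D M := hposN M le_rfl
    have hdval : ∀ v : Fin n, D v.val = d v := by
      intro v
      calc D v.val = d ⟨v.val, v.isLt⟩ := liftF_lt d v.val v.isLt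
        _ = d v := congrArg d (Fin.ext rfl)
    have hother : ∀ v : Fin n, v ≠ tF → v ≠ m → d' v = d v := by
      intro v hvt hvm
      have h1 : v.val ≠ t := fun h => hvt (Fin.ext (h.trans htFval.symm))
      have h2 : v.val ≠ M := fun h => hvm (Fin.ext (h.trans hMdef))
      rw [hd'val v, hD'eq, if_neg (by tauto)]
      exact hdval v
    by_cases hadj : G'.Adj tF m
    · -- need a swap first
      -- D t ≤ M
      have hDtM : D t ≤ M := by
        have h1 := hEGN (t+1) (by omega) (by omega)
        have hL : ∑ p ∈ Finset.range (t+1), D p = (t+1) * D t := by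
          rw [Finset.sum_congr rfl fun p hp =>
            hconstN p (by simp only [Finset.mem_range] at hp; omega)]
          rw [Finset.sum_const, Finset.card_range, smul_eq_mul]
        have hsp : ∑ p ∈ Finset.Ico (t+1) (M+1), min (D p) (t+1)
            + ∑ p ∈ Finset.Ico (M+1) n, min (D p) (t+1)
            = ∑ p ∈ Finset.Ico (t+1) n, min (D p) (t+1) :=
          Finset.sum_Ico_consecutive _ (by omega) (by omega)
        have h0 : ∑ p ∈ Finset.Ico (M+1) n, min (D p) (t+1) = 0 :=
          Finset.sum_eq_zero fun p hp => by
            rw [hzeroN p (by simp only [Finset.mem_Ico] at hp; omega)]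
            simp
        have hbd : ∑ p ∈ Finset.Ico (t+1) (M+1), min (D p) (t+1)
            ≤ (M + 1 - (t+1)) * (t+1) := by
          calc ∑ p ∈ Finset.Ico (t+1) (M+1), min (D p) (t+1)
              ≤ ∑ _p ∈ Finset.Ico (t+1) (M+1), (t+1) :=
                Finset.sum_le_sum fun p _ => min_le_right _ _
            _ = (M + 1 - (t+1)) * (t+1) := by
                rw [Finset.sum_const, Nat.card_Ico, smul_eq_mul]
        have hco : (t+1) * t + (M + 1 - (t+1)) * (t+1) = (t+1) * M := by
          rw [Nat.mul_comm (M + 1 - (t+1)) (t+1), ← Nat.mul_add]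
          congr 1
          omega
        have hfin : (t+1) * D t ≤ (t+1) * M := by
          rw [hL] at h1
          have ht1 : t + 1 - 1 = t := by omega
          rw [ht1] at h1
          omega
        exact Nat.le_of_mul_le_mul_left hfin (by omega)
      set C := (Finset.univ.filter (fun i : Fin n => i.val < M + 1)).erase tF with hC
      have htFmem : tF ∈ Finset.univ.filter (fun i : Fin n => i.val < M + 1) := by
        simp only [Finset.mem_filter, Finset.mem_univ, true_and]
        omega
      have hCcard : C.card = M := by
        rw [hC, Finset.card_erase_of_mem htFmem, card_filter_lt (M+1) (by omega)]
        omega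
      have hdegtF : (G'.neighborSet tF).ncard = D t - 1 := by
        rw [hG' tF]
        exact hD'tval
      have hbex : ∃ b ∈ C, b ∉ G'.neighborSet tF := by
        by_contra hcon
        push_neg at hcon
        have hsub : ↑C ⊆ G'.neighborSet tF := fun b hb => hcon b (by exact_mod_cast hb)
        have hle := Set.ncard_le_ncard hsub (Set.toFinite _)
        rw [Set.ncard_coe_finset, hCcard, hdegtF] at hle
        omega
      obtain ⟨b, hbC, hbN⟩ := hbex
      have hbtF : b ≠ tF := (Finset.mem_erase.1 hbC).1
      have hbval : b.val < M + 1 := by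
        have := (Finset.mem_erase.1 hbC).2
        simp only [Finset.mem_filter, Finset.mem_univ, true_and] at this
        exact this
      have hbm : b ≠ m := by
        rintro rfl
        exact hbN hadj
      have hbadj : ¬G'.Adj tF b := hbN
      have hdegb : (G'.neighborSet m).ncard ≤ (G'.neighborSet b).ncard := by
        rw [hG' m, hG' b]
        have h1 : b.val ≠ t := fun h => hbtF (Fin.ext (h.trans htFval.symm))
        have h2 : b.val ≠ M := fun h => hbm (Fin.ext (h.trans hMdef))
        have h3 : D' b.val = D b.val := by rw [hD'eq, if_neg (by tauto)]
        have h4 : D M ≤ D b.val := hDanti (by omega)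
        rw [hd'val m, hd'val b, ← hMdef]
        omega
      obtain ⟨H, hHdeg, hHnadj⟩ := swap_lemma G' tF b m hbadj (Ne.symm hbtF) hadj hdegb
      obtain ⟨H2, h2t, h2m, h2o⟩ := add_edge H tF m htFm hHnadj
      refine ⟨H2, fun v => ?_⟩
      rcases eq_or_ne v tF with rfl | hvt
      · rw [h2t, hHdeg tF, hG' tF, hd'val tF, htFval]
        omega
      rcases eq_or_ne v m with rfl | hvm
      · rw [h2m, hHdeg v, hG' v, hd'val v, ← hMdef]
        omega
      · rw [h2o v hvt hvm, hHdeg v, hG' v]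
        exact hother v hvt hvm
    · obtain ⟨H2, h2t, h2m, h2o⟩ := add_edge G' tF m htFm hadj
      refine ⟨H2, fun v => ?_⟩
      rcases eq_or_ne v tF with rfl | hvt
      · rw [h2t, hG' tF, hd'val tF, htFval]
        omega
      rcases eq_or_ne v m with rfl | hvm
      · rw [h2m, hG' v, hd'val v, ← hMdef]
        omega
      · rw [h2o v hvt hvm, hG' v]
        exact hother v hvt hvm


end ErdosGallaiAux


/-- Erdős–Gallai theorem: a nonincreasing sequence `d₁ ≥ d₂ ≥ … ≥ d_n` of natural
numbers is the degree sequence of some simple graph if and only if `Σᵢ dᵢ` is even and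
for every `k ∈ {1,…,n}`, `Σ_{i=1}^k dᵢ ≤ k(k-1) + Σ_{i=k+1}^n min(dᵢ, k)`.
(Here the sequence is indexed by `Fin n`, so `dᵢ` is `d ⟨i-1⟩`.) -/
theorem erdos_gallai {n : ℕ} (d : Fin n → ℕ) (hd : Antitone d) :
    (∃ G : SimpleGraph (Fin n),
        Multiset.map (fun v => (G.neighborSet v).ncard) Finset.univ.val =
          Multiset.map d Finset.univ.val) ↔
      (Even (∑ i, d i) ∧
        ∀ k, 1 ≤ k → k ≤ n →
          ∑ i ∈ Finset.univ.filter (fun i : Fin n => i.val < k), d i ≤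
            k * (k - 1) +
              ∑ i ∈ Finset.univ.filter (fun i : Fin n => k ≤ i.val), min (d i) k) := by
  constructor
  · rintro ⟨G, hG⟩
    exact ErdosGallaiAux.necessity d G hG
  · rintro ⟨hev, hEG⟩
    obtain ⟨G, hG⟩ := ErdosGallaiAux.sufficiency (∑ i, d i) d hd rfl hev hEG
    exact ⟨G, congrArg (fun f => Multiset.map f Finset.univ.val) (funext hG)⟩
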